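/- The linearized Wenger graph L_m(q) contains no cycle of length 4. -/
import Mathlib

/-- In the linearized Wenger graph, point `P` is adjacent to line `L` iff
`l_k + p_k = p_1^{p^{k-2}} l_1` for `2 ≤ k ≤ m+1`. -/
def lwAdj (p : ℕ) {F : Type} [Field F] {m : ℕ} (P L : Fin (m + 1) → F) : Prop :=
  ∀ k : Fin m, L k.succ + P k.succ = P 0 ^ p ^ (k : ℕ) * L 0

/-- The linearized Wenger graph `L_m(q)` as a bipartite graph on points ⊕ lines. -/
def lwGraph (p : ℕ) (F : Type) [Field F] (m : ℕ) :
    SimpleGraph ((Fin (m + 1) → F) ⊕ (Fin (m + 1) → F)) :=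
  SimpleGraph.fromRel fun v w => match v, w with
    | Sum.inl P, Sum.inr L => lwAdj p P L
    | _, _ => False

lemma lw_key {F : Type} [Field F] {p m : ℕ} (hm : 1 ≤ m)
    {P P' L L' : Fin (m+1) → F}
    (h1 : lwAdj p P L) (h2 : lwAdj p P' L) (h3 : lwAdj p P' L') (h4 : lwAdj p P L')
    (hP : P ≠ P') (hL : L ≠ L') : False := by
  have k0 : Fin m := ⟨0, hm⟩
  have e1 := h1 ⟨0, hm⟩
  have e2 := h2 ⟨0, hm⟩
  have e3 := h3 ⟨0, hm⟩
  have e4 := h4 ⟨0, hm⟩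
  simp only [pow_zero, pow_one] at e1 e2 e3 e4
  have key : (P 0 - P' 0) * (L 0 - L' 0) = 0 := by
    linear_combination e2 - e1 + e4 - e3
  rcases mul_eq_zero.mp key with h | h
  · have h0 : P 0 = P' 0 := sub_eq_zero.mp h
    refine hP (funext fun i => ?_)
    refine Fin.cases h0 (fun k => ?_) i
    have hk1 := h1 k
    rw [h0] at hk1
    linear_combination hk1 - h2 k -- fix?
  · have h0 : L 0 = L' 0 := sub_eq_zero.mp h
    refine hL (funext fun i => ?_)
    refine Fin.cases h0 (fun k => ?_) i
    have hk1 := h1 k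
    rw [h0] at hk1
    linear_combination hk1 - h4 k

lemma lw_adj_cases {p : ℕ} {F : Type} [Field F] {m : ℕ}
    {x y : (Fin (m+1) → F) ⊕ (Fin (m+1) → F)}
    (h : (lwGraph p F m).Adj x y) :
    (∃ P L, x = Sum.inl P ∧ y = Sum.inr L ∧ lwAdj p P L) ∨
    (∃ P L, x = Sum.inr L ∧ y = Sum.inl P ∧ lwAdj p P L) := by
  rw [lwGraph, SimpleGraph.fromRel_adj] at h
  obtain ⟨-, h | h⟩ := h <;> rcases x with P | L <;> rcases y with P' | L' <;> simp_all

/-- The linearized Wenger graph `L_m(q)` contains no cycle of length `4`. -/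
theorem stmt12 (p e m : ℕ) [Fact p.Prime] (hm : 1 ≤ m)
    (v : (Fin (m + 1) → GaloisField p e) ⊕ (Fin (m + 1) → GaloisField p e))
    (c : (lwGraph p (GaloisField p e) m).Walk v v) :
    ¬(c.IsCycle ∧ c.length = 4) := by
  rintro ⟨hc, hl⟩
  cases c with
  | nil => simp at hl
  | cons h1 q =>
    cases q with
    | nil => simp at hl
    | cons h2 q =>
      cases q with
      | nil => simp at hl
      | cons h3 q =>
        cases q with
        | nil => simp at hl
        | cons h4 q =>
          cases q with
          | cons h5 q => simp [SimpleGraph.Walk.length_cons] at hl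
          | nil =>
            -- vertices: v, a, b, d, v
            have hnd := hc.2
            simp [SimpleGraph.Walk.support_cons, List.nodup_cons] at hnd
            rename_i a b d
            obtain ⟨⟨hab, had, hav⟩, ⟨hbd, hbv⟩, hdv⟩ := hnd
            rcases lw_adj_cases h1 with ⟨P, L, rfl, rfl, a1⟩ | ⟨P, L, rfl, rfl, a1⟩
            · rcases lw_adj_cases h2 with ⟨P2, L2, h, h', a2⟩ | ⟨P2, L2, h, rfl, a2⟩
              · exact absurd h (by simp)
              · obtain rfl : L2 = L := by simpa [eq_comm] using h
                rcases lw_adj_cases h3 with ⟨P3, L3, h, rfl, a3⟩ | ⟨P3, L3, h, h', a3⟩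
                · obtain rfl : P3 = P2 := by simpa [eq_comm] using h
                  rcases lw_adj_cases h4 with ⟨P4, L4, h, h', a4⟩ | ⟨P4, L4, h, h', a4⟩
                  · exact absurd h (by simp)
                  · obtain rfl : L4 = L3 := by simpa [eq_comm] using h
                    obtain rfl : P4 = P := by simpa [eq_comm] using h'
                    exact lw_key hm a1 a2 a3 a4 (by simpa [eq_comm, Sum.inl.injEq] using hbv)
                      (by simpa [Sum.inr.injEq] using had)
                · exact absurd h (by simp)
            · rcases lw_adj_cases h2 with ⟨P2, L2, h, rfl, a2⟩ | ⟨P2, L2, h, h', a2⟩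
              · obtain rfl : P2 = P := by simpa [eq_comm] using h
                rcases lw_adj_cases h3 with ⟨P3, L3, h, h', a3⟩ | ⟨P3, L3, h, rfl, a3⟩
                · exact absurd h (by simp)
                · obtain rfl : L3 = L2 := by simpa [eq_comm] using h
                  rcases lw_adj_cases h4 with ⟨P4, L4, h, h', a4⟩ | ⟨P4, L4, h, h', a4⟩
                  · obtain rfl : P4 = P3 := by simpa [eq_comm] using h
                    obtain rfl : L4 = L := by simpa [eq_comm] using h'
                    exact lw_key hm a2 a3 (by exact a4) a1
                      (by simpa [eq_comm, Sum.inl.injEq] using had)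
                      (by simpa [eq_comm, Sum.inr.injEq] using hbv)
                  · exact absurd h (by simp)
              · exact absurd h (by simp)
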